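/- arXiv:1604.07615 — 2 statements merged into one kernel-verified Lean document; each statement's English description precedes it below -/
import Mathlib

section
/- Let X be a generic metric space with exactly n ≥ 2 points, and let Y be a metric space with exactly n points such that d_GH(X,Y) < δ(X)/6. Then there exists a bijection f : X → Y that is a structural isomorphism and satisfies (1/2) · dis f = d_GH(X,Y); consequently d_GH(X,Y) = ‖ν(X) − ν(Y)‖_∞. -/
open scoped Classical

/-- The list of half-distances between unordered pairs of distinct points of a finite
metric space, arranged in ascending order: the vector `ν(X) ∈ ℝ^{n(n-1)/2}_∞`. -/
noncomputable def nuList (X : Type*) [MetricSpace X] [Fintype X] : List ℝ :=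
  ((Finset.univ.filter fun p : Sym2 X => ¬ p.IsDiag).val.map
    (Sym2.lift ⟨fun x y => dist x y / 2, fun x y => by simp [dist_comm]⟩)).sort (· ≤ ·)

/-- The `ℓ^∞` distance `‖ν(X) − ν(Y)‖_∞` between two vectors given as lists
(the maximum of coordinatewise absolute differences). -/
noncomputable def supDist (l₁ l₂ : List ℝ) : ℝ :=
  (List.zipWith (fun a b => |a - b|) l₁ l₂).foldr max 0

/-- The quantity `δ(X)`: for a space with at most two points, the distance between the
two points (i.e. the diameter); otherwise the least of the minimal triangle-inequality
defect and the minimal difference of distances of essentially distinct pairs. -/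
noncomputable def deltaX (X : Type*) [MetricSpace X] [Fintype X] : ℝ :=
  if Fintype.card X ≤ 2 then Metric.diam (Set.univ : Set X)
  else
    min
      (sInf {r : ℝ | ∃ x y z : X, x ≠ y ∧ y ≠ z ∧ x ≠ z ∧ r = dist x y + dist y z - dist x z})
      (sInf {r : ℝ | ∃ x y p q : X, x ≠ y ∧ p ≠ q ∧ 3 ≤ ({x, y, p, q} : Set X).ncard ∧
        r = |dist x y - dist p q|})

/-- A finite metric space is generic if all its nonzero distances are pairwise distinct
and all its triangle inequalities are strict. -/
def IsGenericSpace (X : Type*) [MetricSpace X] : Prop :=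
  (∀ x y z w : X, x ≠ y → z ≠ w → dist x y = dist z w → ({x, y} : Set X) = {z, w}) ∧
  (∀ x y z : X, x ≠ y → y ≠ z → x ≠ z → dist x z < dist x y + dist y z)

/-- A bijection between metric spaces is a structural isomorphism if it preserves the
order on the set of distances. -/
def IsStructuralIsomorphism {X Y : Type*} [MetricSpace X] [MetricSpace Y] (f : X ≃ Y) : Prop :=
  ∀ x y z w : X, dist x y ≤ dist z w ↔ dist (f x) (f y) ≤ dist (f z) (f w)

/-- The distortion of a relation between two metric spaces. -/
noncomputable def relDis {X Y : Type*} [MetricSpace X] [MetricSpace Y]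
    (R : Set (X × Y)) : ℝ :=
  sSup {r : ℝ | ∃ p ∈ R, ∃ q ∈ R, r = |dist p.1 q.1 - dist p.2 q.2|}

lemma sort_cons_of_min (M : Multiset ℝ) (x : ℝ) (hx : ∀ y ∈ M, x ≤ y) :
    (x ::ₘ M).sort (· ≤ ·) = x :: M.sort (· ≤ ·) := by
  have hperm : List.Perm ((x ::ₘ M).sort (· ≤ ·)) (x :: M.sort (· ≤ ·)) := by
    refine Multiset.coe_eq_coe.mp ?_
    rw [Multiset.sort_eq, ← Multiset.cons_coe, Multiset.sort_eq]
  exact List.Perm.eq_of_pairwise' (Multiset.pairwise_sort _ _)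
    (List.pairwise_cons.2 ⟨fun b hb => hx b ((Multiset.mem_sort _).1 hb), Multiset.pairwise_sort _ _⟩) hperm

lemma exists_common_sort {α : Type*} (S : Multiset α) (g h : α → ℝ)
    (H : ∀ a ∈ S, ∀ b ∈ S, (g a ≤ g b ↔ h a ≤ h b)) :
    ∃ L : List α, (↑L : Multiset α) = S ∧
      (S.map g).sort (· ≤ ·) = L.map g ∧ (S.map h).sort (· ≤ ·) = L.map h := by
  induction S using Multiset.strongInductionOn with
  | _ S ih =>
    rcases eq_or_ne S 0 with rfl | hS
    · exact ⟨[], by simp⟩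
    · have hne : S.toFinset.Nonempty := by
        simpa [Multiset.toFinset_nonempty] using hS
      obtain ⟨a, haF, hmin⟩ := S.toFinset.exists_min_image g hne
      have haS : a ∈ S := Multiset.mem_toFinset.mp haF
      have hming : ∀ b ∈ S, g a ≤ g b := fun b hb => hmin b (Multiset.mem_toFinset.mpr hb)
      have hminh : ∀ b ∈ S, h a ≤ h b := fun b hb => (H a haS b hb).1 (hming b hb)
      have hET : S.erase a < S := Multiset.erase_lt.mpr haS
      obtain ⟨L', hL'S, hg', hh'⟩ := ih (S.erase a) hET
        (fun b hb c hc => H b (Multiset.mem_of_mem_erase hb) c (Multiset.mem_of_mem_erase hc))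
      refine ⟨a :: L', ?_, ?_, ?_⟩
      · rw [← Multiset.cons_coe, hL'S, Multiset.cons_erase haS]
      · have : S.map g = g a ::ₘ (S.erase a).map g := by
          conv_lhs => rw [← Multiset.cons_erase haS]
          simp
        rw [this, sort_cons_of_min _ _ (by
          intro y hy
          obtain ⟨b, hb, rfl⟩ := Multiset.mem_map.mp hy
          exact hming b (Multiset.mem_of_mem_erase hb)), hg']
        simp
      · have : S.map h = h a ::ₘ (S.erase a).map h := by
          conv_lhs => rw [← Multiset.cons_erase haS]
          simp
        rw [this, sort_cons_of_min _ _ (by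
          intro y hy
          obtain ⟨b, hb, rfl⟩ := Multiset.mem_map.mp hy
          exact hminh b (Multiset.mem_of_mem_erase hb)), hh']
        simp

lemma zipWith_abs_map {α : Type*} (g h : α → ℝ) (L : List α) :
    List.zipWith (fun a b => |a - b|) (L.map g) (L.map h)
      = L.map (fun p => |g p - h p|) := by
  induction L with
  | nil => simp
  | cons a L ih => simp [ih]

lemma foldr_max_le (l : List ℝ) (r : ℝ) (hr : 0 ≤ r) (h : ∀ x ∈ l, x ≤ r) :
    l.foldr max 0 ≤ r := by
  induction l with
  | nil => simpa
  | cons a l ih =>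
    simp only [List.foldr_cons]
    exact max_le (h a (by simp)) (ih fun x hx => h x (List.mem_cons_of_mem _ hx))

lemma le_foldr_max (l : List ℝ) (x : ℝ) (hx : x ∈ l) : x ≤ l.foldr max 0 := by
  induction l with
  | nil => simp at hx
  | cons a l ih =>
    rcases List.mem_cons.mp hx with rfl | hx
    · exact le_max_left _ _
    · exact (ih hx).trans (le_max_right _ _)

lemma foldr_max_nonneg (l : List ℝ) : 0 ≤ l.foldr max 0 := by
  induction l with
  | nil => simp
  | cons a l ih => exact ih.trans (le_max_right _ _)

lemma card_two_eq {X : Type*} [Fintype X] (h2 : Fintype.card X = 2)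
    {a b : X} (hab : a ≠ b) (c : X) : c = a ∨ c = b := by
  by_contra hc
  push_neg at hc
  have h3 : ({a, b, c} : Finset X).card = 3 := by
    rw [Finset.card_insert_of_notMem (by simp [hab, Ne.symm hc.1]),
      Finset.card_insert_of_notMem (by simp [Ne.symm hc.2]), Finset.card_singleton]
  have := (Finset.card_le_univ ({a, b, c} : Finset X)).trans_eq h2
  omega

/-- The half-distance function on unordered pairs. -/
noncomputable def halfDist (X : Type*) [MetricSpace X] : Sym2 X → ℝ :=
  Sym2.lift ⟨fun x y => dist x y / 2, fun x y => by simp [dist_comm]⟩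


lemma nuList_eq_halfDist (X : Type*) [MetricSpace X] [Fintype X] :
    nuList X = ((Finset.univ.filter fun p : Sym2 X => ¬ p.IsDiag).val.map
      (halfDist X)).sort (· ≤ ·) := rfl


/-- If `X` is a generic metric space with `n ≥ 2` points and `Y` is an `n`-point metric
space with `d_GH(X,Y) < δ(X)/6`, then there is a bijection `f : X → Y` that is a
structural isomorphism with `(1/2)·dis f = d_GH(X,Y)`; consequently
`d_GH(X,Y) = ‖ν(X) − ν(Y)‖_∞`. -/
theorem exists_structural_isomorphism_of_ghDist_lt
    (X Y : Type) [MetricSpace X] [Fintype X] [Nonempty X]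
    [MetricSpace Y] [Fintype Y] [Nonempty Y]
    (hn : 2 ≤ Fintype.card X) (hcard : Fintype.card Y = Fintype.card X)
    (hX : IsGenericSpace X)
    (hlt : GromovHausdorff.ghDist X Y < deltaX X / 6) :
    (∃ f : X ≃ Y, IsStructuralIsomorphism f ∧
      (1 / 2) * relDis {p : X × Y | p.2 = f p.1} = GromovHausdorff.ghDist X Y) ∧
    GromovHausdorff.ghDist X Y = supDist (nuList X) (nuList Y) := by
  classical
  set r := GromovHausdorff.ghDist X Y with hrdef
  have hr0 : 0 ≤ r := by
    rw [hrdef, GromovHausdorff.ghDist]; exact dist_nonneg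
  have hδr : 6 * r < deltaX X := by linarith
  -- the optimal coupling
  set Z := GromovHausdorff.OptimalGHCoupling X Y with hZ
  set il : X → Z := GromovHausdorff.optimalGHInjl X Y with hil'
  set ir : Y → Z := GromovHausdorff.optimalGHInjr X Y with hir'
  have hil : Isometry il := GromovHausdorff.isometry_optimalGHInjl X Y
  have hir : Isometry ir := GromovHausdorff.isometry_optimalGHInjr X Y
  have hH : Metric.hausdorffDist (Set.range il) (Set.range ir) = r :=
    GromovHausdorff.hausdorffDist_optimal
  have hcl : IsCompact (Set.range il) := isCompact_range hil.continuous
  have hcr : IsCompact (Set.range ir) := isCompact_range hir.continuous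
  have hne_top : EMetric.hausdorffEdist (Set.range il) (Set.range ir) ≠ ⊤ :=
    Metric.hausdorffEdist_ne_top_of_nonempty_of_bounded (Set.range_nonempty il)
      (Set.range_nonempty ir) hcl.isBounded hcr.isBounded
  -- a nearest-point map
  have hf0 : ∀ x : X, ∃ y : Y, dist (il x) (ir y) ≤ r := by
    intro x
    have h1 : Metric.infDist (il x) (Set.range ir) ≤ r := by
      rw [← hH]
      exact Metric.infDist_le_hausdorffDist_of_mem (Set.mem_range_self x) hne_top
    obtain ⟨z, hz, hdz⟩ := hcr.exists_infDist_eq_dist (Set.range_nonempty ir) (il x)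
    obtain ⟨y, rfl⟩ := hz
    exact ⟨y, by rw [← hdz]; exact h1⟩
  choose f0 hf0d using hf0
  -- distortion of f0 is at most 2r
  have hdis : ∀ a b : X, |dist a b - dist (f0 a) (f0 b)| ≤ 2 * r := by
    intro a b
    have e1 : dist (il a) (il b) = dist a b := hil.dist_eq a b
    have e2 : dist (ir (f0 a)) (ir (f0 b)) = dist (f0 a) (f0 b) := hir.dist_eq _ _
    have t1 := dist_triangle4 (il a) (ir (f0 a)) (ir (f0 b)) (il b)
    have t2 := dist_triangle4 (ir (f0 a)) (il a) (il b) (ir (f0 b))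
    have d1 := hf0d a
    have d2 := hf0d b
    have c1 : dist (ir (f0 b)) (il b) = dist (il b) (ir (f0 b)) := dist_comm _ _
    have c2 : dist (ir (f0 a)) (il a) = dist (il a) (ir (f0 a)) := dist_comm _ _
    have c3 : dist (il b) (ir (f0 b)) ≤ r := d2
    rw [abs_le]
    constructor <;> linarith
  -- separation estimates coming from δ(X)
  have sep1 : ∀ a b : X, a ≠ b → 2 * r < dist a b := by
    intro a b hab
    rcases lt_or_eq_of_le hn with h3 | h2
    · -- at least three points
      have hδ : deltaX X
          = min
            (sInf {t : ℝ | ∃ x y z : X, x ≠ y ∧ y ≠ z ∧ x ≠ z ∧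
              t = dist x y + dist y z - dist x z})
            (sInf {t : ℝ | ∃ x y p q : X, x ≠ y ∧ p ≠ q ∧ 3 ≤ ({x, y, p, q} : Set X).ncard ∧
              t = |dist x y - dist p q|}) := by
        rw [deltaX, if_neg (by omega)]
      obtain ⟨c, hca, hcb⟩ : ∃ c : X, c ≠ a ∧ c ≠ b := by
        by_contra hc
        push_neg at hc
        have hsub : (Finset.univ : Finset X) ⊆ {a, b} := by
          intro c _
          rcases eq_or_ne c a with rfl | h
          · simp
          · simp [hc c h]
        have := Finset.card_le_card hsub
        have h2' : ({a, b} : Finset X).card ≤ 2 :=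
          (Finset.card_insert_le _ _).trans (by simp)
        rw [Finset.card_univ] at this
        omega
      have hbdd : BddBelow {t : ℝ | ∃ x y z : X, x ≠ y ∧ y ≠ z ∧ x ≠ z ∧
          t = dist x y + dist y z - dist x z} := by
        refine ⟨0, ?_⟩
        rintro t ⟨x, y, z, _, _, _, rfl⟩
        have := dist_triangle x y z
        linarith
      have hmem : (dist a b + dist b c - dist a c)
          ∈ {t : ℝ | ∃ x y z : X, x ≠ y ∧ y ≠ z ∧ x ≠ z ∧
              t = dist x y + dist y z - dist x z} :=
        ⟨a, b, c, hab, Ne.symm hcb, Ne.symm hca, rfl⟩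
      have h5 : deltaX X ≤ dist a b + dist b c - dist a c := by
        rw [hδ]
        exact (min_le_left _ _).trans (csInf_le hbdd hmem)
      have htri : dist b c ≤ dist b a + dist a c := dist_triangle b a c
      have hcomm : dist b a = dist a b := dist_comm b a
      have h0 : 0 ≤ dist a b := dist_nonneg
      linarith
    · -- exactly two points
      have h2 : Fintype.card X = 2 := h2.symm
      have hδ : deltaX X = Metric.diam (Set.univ : Set X) := by
        rw [deltaX, if_pos (by omega)]
      have hdiam : Metric.diam (Set.univ : Set X) ≤ dist a b := by
        apply Metric.diam_le_of_forall_dist_le dist_nonneg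
        intro x _ y _
        rcases card_two_eq h2 hab x with hx | hx <;>
          rcases card_two_eq h2 hab y with hy | hy <;> rw [hx, hy] <;>
          first
            | exact le_refl (dist a b)
            | exact (dist_comm b a).le
            | simp [dist_nonneg]
      rw [hδ] at hδr
      linarith
  have sep2 : ∀ a b c d : X, a ≠ b → c ≠ d →
      ¬((a = c ∧ b = d) ∨ (a = d ∧ b = c)) → 4 * r < |dist a b - dist c d| := by
    intro a b c d hab hcd hp
    rcases lt_or_eq_of_le hn with h3 | h2
    · have hδ : deltaX X
          = min
            (sInf {t : ℝ | ∃ x y z : X, x ≠ y ∧ y ≠ z ∧ x ≠ z ∧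
              t = dist x y + dist y z - dist x z})
            (sInf {t : ℝ | ∃ x y p q : X, x ≠ y ∧ p ≠ q ∧ 3 ≤ ({x, y, p, q} : Set X).ncard ∧
              t = |dist x y - dist p q|}) := by
        rw [deltaX, if_neg (by omega)]
      -- some element of {c,d} avoids {a,b}
      have hu : (c ≠ a ∧ c ≠ b) ∨ (d ≠ a ∧ d ≠ b) := by
        by_contra hcon
        push_neg at hcon
        obtain ⟨hc', hd'⟩ := hcon
        have hc2 : c = a ∨ c = b := by
          rcases Classical.em (c = a) with h | h
          · exact Or.inl h
          · exact Or.inr (hc' h)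
        have hd2 : d = a ∨ d = b := by
          rcases Classical.em (d = a) with h | h
          · exact Or.inl h
          · exact Or.inr (hd' h)
        rcases hc2 with hc | hc <;> rcases hd2 with hd | hd
        · exact hcd (hc.trans hd.symm)
        · exact hp (Or.inl ⟨hc.symm, hd.symm⟩)
        · exact hp (Or.inr ⟨hd.symm, hc.symm⟩)
        · exact hcd (hc.trans hd.symm)
      have h3card : 3 ≤ ({a, b, c, d} : Set X).ncard := by
        rcases hu with ⟨h1, h2'⟩ | ⟨h1, h2'⟩
        · have hsub : ({a, b, c} : Set X) ⊆ {a, b, c, d} := by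
            intro x hx
            simp only [Set.mem_insert_iff, Set.mem_singleton_iff] at hx ⊢
            tauto
          have h33 : ({a, b, c} : Set X).ncard = 3 :=
            Set.ncard_eq_three.mpr ⟨a, b, c, hab, Ne.symm h1, Ne.symm h2', rfl⟩
          calc (3 : ℕ) = ({a, b, c} : Set X).ncard := h33.symm
            _ ≤ _ := Set.ncard_le_ncard hsub (Set.toFinite _)
        · have hsub : ({a, b, d} : Set X) ⊆ {a, b, c, d} := by
            intro x hx
            simp only [Set.mem_insert_iff, Set.mem_singleton_iff] at hx ⊢
            tauto
          have h33 : ({a, b, d} : Set X).ncard = 3 :=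
            Set.ncard_eq_three.mpr ⟨a, b, d, hab, Ne.symm h1, Ne.symm h2', rfl⟩
          calc (3 : ℕ) = ({a, b, d} : Set X).ncard := h33.symm
            _ ≤ _ := Set.ncard_le_ncard hsub (Set.toFinite _)
      have hbdd : BddBelow {t : ℝ | ∃ x y p q : X, x ≠ y ∧ p ≠ q ∧
          3 ≤ ({x, y, p, q} : Set X).ncard ∧ t = |dist x y - dist p q|} := by
        refine ⟨0, ?_⟩
        rintro t ⟨x, y, p, q, _, _, _, rfl⟩
        exact abs_nonneg _
      have h5 : deltaX X ≤ |dist a b - dist c d| := by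
        rw [hδ]
        exact (min_le_right _ _).trans (csInf_le hbdd ⟨a, b, c, d, hab, hcd, h3card, rfl⟩)
      linarith
    · exfalso
      have h2' : Fintype.card X = 2 := h2.symm
      rcases card_two_eq h2' hab c with hc | hc <;>
        rcases card_two_eq h2' hab d with hd | hd
      · exact hcd (hc.trans hd.symm)
      · exact hp (Or.inl ⟨hc.symm, hd.symm⟩)
      · exact hp (Or.inr ⟨hd.symm, hc.symm⟩)
      · exact hcd (hc.trans hd.symm)
  -- f0 is injective, hence bijective
  have hinj : Function.Injective f0 := by
    intro a b hab
    by_contra hne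
    have h1 := sep1 a b hne
    have e1 : dist (il a) (il b) = dist a b := hil.dist_eq a b
    have t := dist_triangle (il a) (ir (f0 a)) (il b)
    have hcm : dist (ir (f0 a)) (il b) = dist (il b) (ir (f0 b)) := by
      rw [hab, dist_comm]
    have d1 := hf0d a
    have d2 := hf0d b
    linarith
  have hbij : Function.Bijective f0 :=
    (Fintype.bijective_iff_injective_and_card f0).mpr ⟨hinj, hcard.symm⟩
  set f : X ≃ Y := Equiv.ofBijective f0 hbij with hfdef
  have hfeq : ∀ x : X, f x = f0 x := fun _ => rfl
  -- structural isomorphism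
  have hsi : IsStructuralIsomorphism f := by
    intro x y z w
    rcases eq_or_ne x y with rfl | hxy
    · simp [dist_nonneg]
    rcases eq_or_ne z w with rfl | hzw
    · have h1 : ¬ dist x y ≤ dist z z := by
        rw [dist_self]
        exact not_le.mpr (dist_pos.2 hxy)
      have h2 : ¬ dist (f x) (f y) ≤ dist (f z) (f z) := by
        rw [dist_self]
        exact not_le.mpr (dist_pos.2 fun h => hxy (f.injective h))
      exact iff_of_false h1 h2
    by_cases hp : (x = z ∧ y = w) ∨ (x = w ∧ y = z)
    · rcases hp with ⟨rfl, rfl⟩ | ⟨rfl, rfl⟩ <;> simp [dist_comm]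
    · have h4 := sep2 x y z w hxy hzw hp
      have hda := abs_le.1 (hdis x y)
      have hdb := abs_le.1 (hdis z w)
      constructor
      · intro hle
        have habs : |dist x y - dist z w| = dist z w - dist x y := by
          rw [abs_of_nonpos (by linarith), neg_sub]
        rw [habs] at h4
        show dist (f0 x) (f0 y) ≤ dist (f0 z) (f0 w)
        linarith
      · intro hle
        by_contra hno
        push_neg at hno
        have habs : |dist x y - dist z w| = dist x y - dist z w :=
          abs_of_nonneg (by linarith)
        rw [habs] at h4
        have hle' : dist (f0 x) (f0 y) ≤ dist (f0 z) (f0 w) := hle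
        linarith
  -- the distortion set
  set T : Set ℝ := {t : ℝ | ∃ p ∈ {p : X × Y | p.2 = f p.1},
      ∃ q ∈ {p : X × Y | p.2 = f p.1}, t = |dist p.1 q.1 - dist p.2 q.2|} with hT
  have hrel : relDis {p : X × Y | p.2 = f p.1} = sSup T := rfl
  have hTr : T = Set.range (fun q : X × X => |dist q.1 q.2 - dist (f0 q.1) (f0 q.2)|) := by
    ext t
    constructor
    · rintro ⟨p, hp, q, hq, rfl⟩
      refine ⟨(p.1, q.1), ?_⟩
      simp only [Set.mem_setOf_eq] at hp hq
      show |dist p.1 q.1 - dist (f0 p.1) (f0 q.1)| = |dist p.1 q.1 - dist p.2 q.2|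
      rw [hp, hq, hfeq, hfeq]
    · rintro ⟨⟨a, b⟩, rfl⟩
      exact ⟨(a, f a), rfl, (b, f b), rfl, rfl⟩
  have hub : ∀ t ∈ T, t ≤ 2 * r := by
    rw [hTr]
    rintro t ⟨⟨a, b⟩, rfl⟩
    exact hdis a b
  have hsup_le : sSup T ≤ 2 * r := Real.sSup_le hub (by linarith)
  have hTne : T.Nonempty := by
    rw [hTr]
    exact Set.range_nonempty _
  have hTfin : T.Finite := by
    rw [hTr]
    exact Set.finite_range _
  have hmemT : sSup T ∈ T := hTne.csSup_mem hTfin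
  have hge : r ≤ sSup T / 2 := by
    have happ := GromovHausdorff.ghDist_le_of_approx_subsets
      (X := X) (Y := Y) (s := (Set.univ : Set X)) (fun x => f0 x.1)
      (ε₁ := 0) (ε₂ := sSup T) (ε₃ := 0) ?_ ?_ ?_
    · rw [← hrdef] at happ
      linarith
    · intro x
      exact ⟨x, Set.mem_univ x, by simp⟩
    · intro y
      refine ⟨⟨f.symm y, Set.mem_univ _⟩, ?_⟩
      have : f0 (f.symm y) = y := f.apply_symm_apply y
      simp [this]
    · intro p q
      have hmem : |dist (p : X) (q : X) - dist (f0 p) (f0 q)| ∈ T := by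
        rw [hTr]
        exact ⟨((p : X), (q : X)), rfl⟩
      have hb : BddAbove T := ⟨2 * r, hub⟩
      calc |dist p q - dist (f0 p) (f0 q)|
          = |dist (p : X) (q : X) - dist (f0 p) (f0 q)| := by rw [Subtype.dist_eq]
        _ ≤ sSup T := le_csSup hb hmem
  have hsup : sSup T = 2 * r := le_antisymm hsup_le (by linarith)
  -- the nuList part
  have hmain : supDist (nuList X) (nuList Y) = r := by
    have hinj2 : Function.Injective (Sym2.map f0) := Sym2.map.injective hinj
    set SX : Multiset (Sym2 X) := (Finset.univ.filter fun p : Sym2 X => ¬ p.IsDiag).val with hSX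
    set emb : Sym2 X ↪ Sym2 Y := ⟨Sym2.map f0, hinj2⟩ with hemb
    have hsurj : Function.Surjective (Sym2.map f0) := by
      intro q
      induction q using Sym2.ind with
      | _ y1 y2 =>
        refine ⟨s(f.symm y1, f.symm y2), ?_⟩
        rw [Sym2.map_pair_eq]
        have e1 : f0 (f.symm y1) = y1 := f.apply_symm_apply y1
        have e2 : f0 (f.symm y2) = y2 := f.apply_symm_apply y2
        rw [e1, e2]
    have huniv : (Finset.univ : Finset (Sym2 X)).map emb = Finset.univ := by
      apply Finset.eq_univ_of_forall
      intro q
      obtain ⟨p, hp⟩ := hsurj q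
      exact Finset.mem_map.mpr ⟨p, Finset.mem_univ p, hp⟩
    have hfilter : (Finset.univ.filter fun p : Sym2 Y => ¬ p.IsDiag)
        = (Finset.univ.filter fun p : Sym2 X => ¬ p.IsDiag).map emb := by
      have h1 : ((Finset.univ : Finset (Sym2 X)).map emb).filter (fun p : Sym2 Y => ¬ p.IsDiag)
          = ((Finset.univ : Finset (Sym2 X)).filter
              ((fun p : Sym2 Y => ¬ p.IsDiag) ∘ emb)).map emb :=
        Finset.filter_map
      rw [huniv] at h1
      rw [h1]
      congr 1
      apply Finset.filter_congr
      intro p _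
      simp only [Function.comp_apply, hemb, Function.Embedding.coeFn_mk]
      rw [Sym2.isDiag_map hinj]
    have hmono : ∀ p ∈ SX, ∀ q ∈ SX,
        (halfDist X p ≤ halfDist X q ↔
          halfDist Y (Sym2.map f0 p) ≤ halfDist Y (Sym2.map f0 q)) := by
      intro p _ q _
      induction p using Sym2.ind with
      | _ x y =>
        induction q using Sym2.ind with
        | _ z w =>
          rw [Sym2.map_pair_eq, Sym2.map_pair_eq]
          have e1 : halfDist X s(x, y) = dist x y / 2 := rfl
          have e2 : halfDist X s(z, w) = dist z w / 2 := rfl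
          have e3 : halfDist Y s(f0 x, f0 y) = dist (f0 x) (f0 y) / 2 := rfl
          have e4 : halfDist Y s(f0 z, f0 w) = dist (f0 z) (f0 w) / 2 := rfl
          rw [e1, e2, e3, e4]
          have hs := hsi x y z w
          have hfx : f x = f0 x := rfl
          have hfy : f y = f0 y := rfl
          have hfz : f z = f0 z := rfl
          have hfw : f w = f0 w := rfl
          rw [hfx, hfy, hfz, hfw] at hs
          constructor
          · intro h
            have h' : dist x y ≤ dist z w := by linarith
            have h'' := hs.1 h'
            linarith
          · intro h
            have h' : dist (f0 x) (f0 y) ≤ dist (f0 z) (f0 w) := by linarith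
            have h'' := hs.2 h'
            linarith
    obtain ⟨L, hLS, hgL, hhL⟩ := exists_common_sort SX (halfDist X)
      (fun p => halfDist Y (Sym2.map f0 p)) hmono
    · have hXL : nuList X = L.map (halfDist X) := by
        rw [nuList_eq_halfDist]
        exact hgL
      have hYL : nuList Y = L.map (fun p => halfDist Y (Sym2.map f0 p)) := by
        rw [nuList_eq_halfDist, hfilter]
        have : ((Finset.univ.filter fun p : Sym2 X => ¬ p.IsDiag).map emb).val
            = SX.map (Sym2.map f0) := by
          rw [Finset.map_val]
          rfl
        rw [this, Multiset.map_map]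
        exact hhL
      rw [supDist, hXL, hYL, zipWith_abs_map]
      -- each entry is at most r
      have heb : ∀ p : Sym2 X,
          |halfDist X p - halfDist Y (Sym2.map f0 p)| ≤ r := by
        intro p
        induction p using Sym2.ind with
        | _ x y =>
          have h1 := hdis x y
          rw [Sym2.map_pair_eq]
          have e1 : halfDist X s(x, y) = dist x y / 2 := rfl
          have e2 : halfDist Y s(f0 x, f0 y) = dist (f0 x) (f0 y) / 2 := rfl
          rw [e1, e2]
          have : dist x y / 2 - dist (f0 x) (f0 y) / 2
              = (dist x y - dist (f0 x) (f0 y)) / 2 := by ring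
          rw [this, abs_div]
          rw [show |(2 : ℝ)| = 2 by norm_num]
          linarith
      have hbound : ∀ t ∈ L.map (fun p => |halfDist X p - halfDist Y (Sym2.map f0 p)|),
          t ≤ r := by
        intro t ht
        obtain ⟨p, _, rfl⟩ := List.mem_map.mp ht
        exact heb p
      -- the supremum is attained
      have hmem2 : 2 * r ∈ T := hsup ▸ hmemT
      rw [hTr] at hmem2
      obtain ⟨⟨a, b⟩, hab0⟩ := hmem2
      have hab : |dist a b - dist (f0 a) (f0 b)| = 2 * r := hab0
      rcases eq_or_ne a b with rfl | hne
      · -- then r = 0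
        have hr00 : r = 0 := by
          have h00 : |dist a a - dist (f0 a) (f0 a)| = 0 := by simp
          rw [h00] at hab
          linarith
        rw [hr00]
        refine le_antisymm (foldr_max_le _ _ le_rfl ?_) (foldr_max_nonneg _)
        intro t ht
        have h := hbound t ht
        rw [hr00] at h
        exact h
      · -- the pair s(a,b) realizes the value r
        have hpL : s(a, b) ∈ L := by
          have hmem : s(a, b) ∈ SX := by
            rw [hSX, Finset.mem_val, Finset.mem_filter]
            exact ⟨Finset.mem_univ _, by rw [Sym2.mk_isDiag_iff]; exact hne⟩
          rw [← hLS] at hmem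
          exact Multiset.mem_coe.mp hmem
        have hval : |halfDist X s(a, b) - halfDist Y (Sym2.map f0 s(a, b))| = r := by
          rw [Sym2.map_pair_eq]
          have e1 : halfDist X s(a, b) = dist a b / 2 := rfl
          have e2 : halfDist Y s(f0 a, f0 b) = dist (f0 a) (f0 b) / 2 := rfl
          rw [e1, e2]
          have : dist a b / 2 - dist (f0 a) (f0 b) / 2
              = (dist a b - dist (f0 a) (f0 b)) / 2 := by ring
          rw [this, abs_div, show |(2 : ℝ)| = 2 by norm_num, hab]
          ring
        refine le_antisymm (foldr_max_le _ _ hr0 hbound) ?_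
        have : r ∈ L.map (fun p => |halfDist X p - halfDist Y (Sym2.map f0 p)|) :=
          List.mem_map.mpr ⟨s(a, b), hpL, hval⟩
        exact le_foldr_max _ _ this
  refine ⟨⟨f, hsi, ?_⟩, hmain.symm⟩
  rw [hrel, hsup]
  ring
end

section
/- Every finite nonempty metric space can be isometrically embedded into the Gromov–Hausdorff space, i.e., for every finite nonempty metric space X there exists a map f from X to the space of isometry classes of nonempty compact metric spaces such that d_GH(f(x), f(x')) = d(x,x') for all x, x' ∈ X. -/
open Metric Set GromovHausdorff

namespace GHEmbedAux

variable (X : Type) [MetricSpace X] [Fintype X]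

/-- Diameter of `X`. -/
noncomputable def DD : ℝ := Metric.diam (Set.univ : Set X)

lemma DD_nonneg : 0 ≤ DD X := Metric.diam_nonneg

lemma dist_le_DD (x y : X) : dist x y ≤ DD X :=
  Metric.dist_le_diam_of_mem Set.finite_univ.isBounded (Set.mem_univ x) (Set.mem_univ y)

/-- generic labels with big gaps -/
noncomputable def lam (y : X) : ℝ := ((Fintype.equivFin X y : ℕ) : ℝ) * (6 * DD X + 3)

lemma lam_nonneg (y : X) : 0 ≤ lam X y := by
  have h : (0:ℝ) ≤ 6 * DD X + 3 := by have := DD_nonneg X; linarith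
  exact mul_nonneg (Nat.cast_nonneg _) h

lemma lam_gap {y z : X} (h : y ≠ z) : 6 * DD X + 3 ≤ |lam X y - lam X z| := by
  have hne : (Fintype.equivFin X y : ℕ) ≠ (Fintype.equivFin X z : ℕ) := by
    intro hc
    exact h ((Fintype.equivFin X).injective (Fin.ext hc))
  have hgap : (0:ℝ) ≤ 6 * DD X + 3 := by have := DD_nonneg X; linarith
  have h1 : (1:ℝ) ≤ |((Fintype.equivFin X y : ℕ) : ℝ) - ((Fintype.equivFin X z : ℕ) : ℝ)| := by
    have hZ : ((Fintype.equivFin X y : ℕ) : ℝ) - ((Fintype.equivFin X z : ℕ) : ℝ)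
        = ((((Fintype.equivFin X y : ℕ) : ℤ) - ((Fintype.equivFin X z : ℕ) : ℤ) : ℤ) : ℝ) := by
      push_cast; ring
    rw [hZ, ← Int.cast_abs]
    have hzz : ((Fintype.equivFin X y : ℕ) : ℤ) ≠ ((Fintype.equivFin X z : ℕ) : ℤ) := by
      exact_mod_cast hne
    exact_mod_cast Int.one_le_abs (sub_ne_zero.mpr hzz)
  calc 6 * DD X + 3 = 1 * (6 * DD X + 3) := by ring
    _ ≤ |((Fintype.equivFin X y : ℕ) : ℝ) - ((Fintype.equivFin X z : ℕ) : ℝ)| * (6 * DD X + 3) :=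
        mul_le_mul_of_nonneg_right h1 hgap
    _ = |lam X y - lam X z| := by
        rw [lam, lam, ← sub_mul, abs_mul, abs_of_nonneg hgap]

lemma lam_le (y : X) : lam X y ≤ ((Fintype.card X : ℝ)) * (6 * DD X + 3) := by
  have h1 : ((Fintype.equivFin X y : ℕ) : ℝ) ≤ (Fintype.card X : ℝ) := by
    exact_mod_cast le_of_lt (Fin.is_lt _)
  have hgap : (0:ℝ) ≤ 6 * DD X + 3 := by have := DD_nonneg X; linarith
  exact mul_le_mul_of_nonneg_right h1 hgap

/-- The big constant. -/
noncomputable def T : ℝ := (Fintype.card X : ℝ) * (6 * DD X + 3) + 2 * DD X + 1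

lemma lam_add_le_T (y : X) : lam X y + 2 * DD X + 1 ≤ T X := by
  have := lam_le X y; rw [T]; linarith

lemma T_pos : 0 < T X := by
  have h2 : (0:ℝ) ≤ (Fintype.card X : ℝ) * (6 * DD X + 3) := by
    have := DD_nonneg X
    exact mul_nonneg (Nat.cast_nonneg _) (by linarith)
  have := DD_nonneg X
  rw [T]; linarith

lemma T_big [Nonempty X] : 2 * DD X + 2 < T X := by
  have h1 : (1:ℝ) ≤ (Fintype.card X : ℝ) := by
    exact_mod_cast Fintype.card_pos
  have hD := DD_nonneg X
  have : (6 * DD X + 3 : ℝ) ≤ (Fintype.card X : ℝ) * (6 * DD X + 3) := by nlinarith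
  rw [T]; linarith

variable {X}

open scoped Classical in
/-- The distance on `Option X` associated to the base point `x`. -/
noncomputable def rho (x : X) : Option X → Option X → ℝ
  | none, none => 0
  | none, some y => 3 * T X + lam X y + 2 * dist x y
  | some y, none => 3 * T X + lam X y + 2 * dist x y
  | some y, some z => if y = z then 0 else T X

lemma rho_none_none (x : X) : rho x none none = 0 := rfl

lemma rho_none_some (x y : X) :
    rho x none (some y) = 3 * T X + lam X y + 2 * dist x y := rfl

lemma rho_some_none (x y : X) :
    rho x (some y) none = 3 * T X + lam X y + 2 * dist x y := rfl

lemma rho_some_some_self (x y : X) : rho x (some y) (some y) = 0 := by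
  classical
  simp [rho]

lemma rho_some_some_ne (x : X) {y z : X} (h : y ≠ z) :
    rho x (some y) (some z) = T X := by
  classical
  simp only [rho]
  rw [if_neg h]

lemma rho_self (x : X) (a : Option X) : rho x a a = 0 := by
  cases a with
  | none => rfl
  | some y => exact rho_some_some_self x y

lemma rho_comm (x : X) (a b : Option X) : rho x a b = rho x b a := by
  cases a with
  | none => cases b with
    | none => rfl
    | some z => rw [rho_none_some, rho_some_none]
  | some y => cases b with
    | none => rw [rho_none_some, rho_some_none]
    | some z =>
      by_cases h : y = z
      · subst h; rfl
      · rw [rho_some_some_ne x h, rho_some_some_ne x (Ne.symm h)]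

lemma rho_nonneg (x : X) (a b : Option X) : 0 ≤ rho x a b := by
  have hT := T_pos X
  cases a with
  | none => cases b with
    | none => simp [rho_none_none]
    | some z =>
      rw [rho_none_some]
      have := lam_nonneg X z; have := dist_nonneg (x := x) (y := z); linarith
  | some y => cases b with
    | none =>
      rw [rho_some_none]
      have := lam_nonneg X y; have := dist_nonneg (x := x) (y := y); linarith
    | some z =>
      by_cases h : y = z
      · subst h; rw [rho_some_some_self]
      · rw [rho_some_some_ne x h]; linarith

lemma T_le_rho (x : X) {a b : Option X} (h : a ≠ b) : T X ≤ rho x a b := by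
  have hT := T_pos X
  cases a with
  | none =>
    cases b with
    | none => exact absurd rfl h
    | some z =>
      rw [rho_none_some]
      have := dist_nonneg (x := x) (y := z)
      have := lam_nonneg X z
      linarith
  | some y =>
    cases b with
    | none =>
      rw [rho_some_none]
      have := dist_nonneg (x := x) (y := y)
      have := lam_nonneg X y
      linarith
    | some z =>
      have hyz : y ≠ z := by intro hc; exact h (by rw [hc])
      rw [rho_some_some_ne x hyz]

lemma rho_triangle (x : X) (a b c : Option X) :
    rho x a c ≤ rho x a b + rho x b c := by
  have hT := T_pos X
  have hl := lam_nonneg X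
  have hd : ∀ y : X, dist x y ≤ DD X := fun y => dist_le_DD X x y
  have hd0 : ∀ y : X, 0 ≤ dist x y := fun y => dist_nonneg
  have hlt : ∀ y : X, lam X y + 2 * DD X + 1 ≤ T X := lam_add_le_T X
  cases a with
  | none =>
    cases c with
    | none =>
      rw [rho_none_none]
      have := rho_nonneg x (none : Option X) b
      have := rho_nonneg x b (none : Option X)
      linarith
    | some z =>
      cases b with
      | none => rw [rho_none_none]; linarith
      | some w =>
        by_cases hwz : w = z
        · subst hwz; simp only [rho_some_some_self, rho_none_some]; linarith
        · simp only [rho_some_some_ne x hwz, rho_none_some]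
          have h1 := hd z; have h2 := hlt z
          have := hl w; have := hd0 w; have := hd0 z
          linarith
  | some y =>
    cases c with
    | none =>
      cases b with
      | none =>
        simp only [rho_some_none, rho_none_none]; linarith
      | some w =>
        by_cases hyw : y = w
        · subst hyw; simp only [rho_some_some_self, rho_some_none]; linarith
        · simp only [rho_some_some_ne x hyw, rho_some_none]
          have h1 := hd y; have h2 := hlt y
          have := hl w; have := hd0 w; have := hd0 y
          linarith
    | some z =>
      by_cases hyz : y = z
      · subst hyz
        rw [rho_some_some_self]
        have := rho_nonneg x (some y) b
        have := rho_nonneg x b (some y)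
        linarith
      · rw [rho_some_some_ne x hyz]
        cases b with
        | none =>
          rw [rho_some_none, rho_none_some]
          have := hl y; have := hd0 y; have := hl z; have := hd0 z
          linarith
        | some w =>
          by_cases hyw : y = w
          · subst hyw; rw [rho_some_some_self, rho_some_some_ne x hyz]; linarith
          · by_cases hwz : w = z
            · subst hwz; rw [rho_some_some_self, rho_some_some_ne x hyw]; linarith
            · rw [rho_some_some_ne x hyw, rho_some_some_ne x hwz]; linarith

lemma rho_eq_zero {x : X} {a b : Option X} (h : rho x a b = 0) : a = b := by
  by_contra hne
  have := T_le_rho x hne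
  have := T_pos X
  linarith

/-- The point space: a copy of `Option X` with the metric `rho x`. -/
def Pt (X : Type) [MetricSpace X] [Fintype X] (_x : X) : Type := Option X

/-- The canonical identification. -/
def toPt (x : X) (a : Option X) : Pt X x := a

noncomputable instance (x : X) : MetricSpace (Pt X x) where
  dist := rho x
  dist_self := rho_self x
  dist_comm := rho_comm x
  dist_triangle := rho_triangle x
  eq_of_dist_eq_zero := fun h => rho_eq_zero h

instance (x : X) : Fintype (Pt X x) := instFintypeOption (α := X)
instance (x : X) : Nonempty (Pt X x) := ⟨toPt x none⟩
instance (x : X) : Finite (Pt X x) := Finite.of_fintype _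
instance (x : X) : CompactSpace (Pt X x) := Finite.compactSpace

lemma toPt_injective (x : X) : Function.Injective (toPt x) := fun _ _ h => h

lemma toPt_surjective (x : X) : Function.Surjective (toPt x) := fun a => ⟨a, rfl⟩

lemma Pt_dist_def (x : X) (a b : Option X) : dist (toPt x a) (toPt x b) = rho x a b := rfl

end GHEmbedAux

open GHEmbedAux

/-- Every finite nonempty metric space can be isometrically embedded into the
Gromov–Hausdorff space. -/
theorem finite_metric_space_embeds_into_GHSpace
    (X : Type) [MetricSpace X] [Fintype X] [Nonempty X] :
    ∃ f : X → GromovHausdorff.GHSpace,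
      ∀ x x' : X, dist (f x) (f x') = dist x x' := by
  classical
  refine ⟨fun x => GromovHausdorff.toGHSpace (Pt X x), ?_⟩
  intro x x'
  rcases eq_or_ne x x' with rfl | hne
  · simp
  have hD := DD_nonneg X
  have hTpos := T_pos X
  have hTbig := T_big X
  have hdd : dist x x' ≤ DD X := dist_le_DD X x x'
  have hdistpos : 0 < dist x x' := dist_pos.mpr hne
  -- `dist` on GHSpace between the two representatives is `ghDist`
  have hGH : dist (GromovHausdorff.toGHSpace (Pt X x)) (GromovHausdorff.toGHSpace (Pt X x'))
      = ghDist (Pt X x) (Pt X x') := rfl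
  rw [hGH]
  -- compatibility of the two metrics
  have Hrho : ∀ p q : Option X, |rho x p q - rho x' p q| ≤ 2 * dist x x' := by
    intro p q
    cases p with
    | none =>
      cases q with
      | none =>
        rw [rho_none_none, rho_none_none, sub_zero, abs_zero]; linarith
      | some z =>
        rw [rho_none_some, rho_none_some]
        have h1 : |dist x z - dist x' z| ≤ dist x x' := abs_dist_sub_le x x' z
        rw [show 3 * T X + lam X z + 2 * dist x z - (3 * T X + lam X z + 2 * dist x' z)
            = 2 * (dist x z - dist x' z) by ring, abs_mul,
          abs_of_nonneg (by norm_num : (0:ℝ) ≤ 2)]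
        linarith
    | some y =>
      cases q with
      | none =>
        rw [rho_some_none, rho_some_none]
        have h1 : |dist x y - dist x' y| ≤ dist x x' := abs_dist_sub_le x x' y
        rw [show 3 * T X + lam X y + 2 * dist x y - (3 * T X + lam X y + 2 * dist x' y)
            = 2 * (dist x y - dist x' y) by ring, abs_mul,
          abs_of_nonneg (by norm_num : (0:ℝ) ≤ 2)]
        linarith
      | some z =>
        by_cases h : y = z
        · subst h; rw [rho_some_some_self, rho_some_some_self, sub_zero, abs_zero]; linarith
        · rw [rho_some_some_ne x h, rho_some_some_ne x' h, sub_self, abs_zero]; linarith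
  have Hcompat : ∀ p q : Option X,
      |dist (toPt x p) (toPt x q) - dist (toPt x' p) (toPt x' q)| ≤ 2 * dist x x' := by
    intro p q
    rw [Pt_dist_def, Pt_dist_def]
    exact Hrho p q
  -- Upper bound : ghDist ≤ dist x x'
  have hupper : ghDist (Pt X x) (Pt X x') ≤ dist x x' := by
    letI M : MetricSpace (Pt X x ⊕ Pt X x') :=
      Metric.glueMetricApprox (Z := Option X) (toPt x) (toPt x') (dist x x') hdistpos Hcompat
    have hIl : Isometry (Sum.inl : Pt X x → Pt X x ⊕ Pt X x') :=
      Isometry.of_dist_eq (fun a b => rfl)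
    have hIr : Isometry (Sum.inr : Pt X x' → Pt X x ⊕ Pt X x') :=
      Isometry.of_dist_eq (fun a b => rfl)
    refine le_trans (ghDist_le_hausdorffDist hIl hIr) ?_
    apply Metric.hausdorffDist_le_of_mem_dist (le_of_lt hdistpos)
    · rintro _ ⟨a, rfl⟩
      obtain ⟨p, rfl⟩ := toPt_surjective x a
      refine ⟨Sum.inr (toPt x' p), ⟨toPt x' p, rfl⟩, ?_⟩
      exact le_of_eq
        (Metric.glueDist_glued_points (Z := Option X) (toPt x) (toPt x') (dist x x') p)
    · rintro _ ⟨a, rfl⟩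
      obtain ⟨p, rfl⟩ := toPt_surjective x' a
      refine ⟨Sum.inl (toPt x p), ⟨toPt x p, rfl⟩, ?_⟩
      rw [dist_comm]
      exact le_of_eq
        (Metric.glueDist_glued_points (Z := Option X) (toPt x) (toPt x') (dist x x') p)
  -- Lower bound : dist x x' ≤ ghDist
  have hlower : dist x x' ≤ ghDist (Pt X x) (Pt X x') := by
    by_contra hcon
    push_neg at hcon
    set r := ghDist (Pt X x) (Pt X x') with hr
    have hr0 : 0 ≤ r := by
      rw [hr, ghDist]; exact dist_nonneg
    set δ : ℝ := min 1 ((dist x x' - r) / 2) with hδdef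
    have hδpos : 0 < δ := by
      apply lt_min one_pos; linarith
    have hδ1 : δ ≤ 1 := min_le_left _ _
    have hδ2 : δ ≤ (dist x x' - r) / 2 := min_le_right _ _
    -- get the optimal coupling
    obtain ⟨Φ, Ψ, hΦ, hΨ, hH⟩ := ghDist_eq_hausdorffDist (Pt X x) (Pt X x')
    have hfin : EMetric.hausdorffEdist (Set.range Φ) (Set.range Ψ) ≠ ⊤ := by
      apply Metric.hausdorffEdist_ne_top_of_nonempty_of_bounded
      · exact Set.range_nonempty _
      · exact Set.range_nonempty _
      · exact (Set.finite_range _).isBounded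
      · exact (Set.finite_range _).isBounded
    have hlt : Metric.hausdorffDist (Set.range Φ) (Set.range Ψ) < r + δ := by
      rw [← hH]; linarith
    have hchoice : ∀ a : Pt X x, ∃ b : Pt X x', dist (Φ a) (Ψ b) < r + δ := by
      intro a
      obtain ⟨y, ⟨b, rfl⟩, hy⟩ :=
        Metric.exists_dist_lt_of_hausdorffDist_lt (Set.mem_range_self a) hlt hfin
      exact ⟨b, hy⟩
    choose φ0 hφ0 using hchoice
    -- transport to `Option X`
    set φ : Option X → Option X := fun p => φ0 (toPt x p) with hφdef
    have hφ : ∀ p : Option X, dist (Φ (toPt x p)) (Ψ (toPt x' (φ p))) < r + δ := by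
      intro p
      have := hφ0 (toPt x p)
      convert this using 3
      rfl
    -- key distortion estimate
    have E : ∀ a b : Option X, |rho x' (φ a) (φ b) - rho x a b| ≤ 2 * (r + δ) := by
      intro a b
      have h1 : rho x' (φ a) (φ b) = dist (Ψ (toPt x' (φ a))) (Ψ (toPt x' (φ b))) := by
        rw [hΨ.dist_eq]; rfl
      have h2 : rho x a b = dist (Φ (toPt x a)) (Φ (toPt x b)) := by
        rw [hΦ.dist_eq]; rfl
      have ha := hφ a
      have hb := hφ b
      rw [abs_le]
      constructor
      · have h3 : dist (Φ (toPt x a)) (Φ (toPt x b))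
            ≤ dist (Φ (toPt x a)) (Ψ (toPt x' (φ a)))
              + dist (Ψ (toPt x' (φ a))) (Ψ (toPt x' (φ b)))
              + dist (Ψ (toPt x' (φ b))) (Φ (toPt x b)) := dist_triangle4 _ _ _ _
        rw [dist_comm (Ψ (toPt x' (φ b))) (Φ (toPt x b))] at h3
        rw [h1, h2]
        linarith
      · have h3 : dist (Ψ (toPt x' (φ a))) (Ψ (toPt x' (φ b)))
            ≤ dist (Ψ (toPt x' (φ a))) (Φ (toPt x a))
              + dist (Φ (toPt x a)) (Φ (toPt x b))
              + dist (Φ (toPt x b)) (Ψ (toPt x' (φ b))) := dist_triangle4 _ _ _ _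
        rw [dist_comm (Ψ (toPt x' (φ a))) (Φ (toPt x a))] at h3
        rw [h1, h2]
        linarith
    have hrD : r < DD X := lt_of_lt_of_le hcon hdd
    have hεsmall : 2 * (r + δ) ≤ 2 * DD X + 2 := by linarith
    -- φ is injective
    have hinj : Function.Injective φ := by
      intro a b hab
      by_contra hne'
      have h1 := E a b
      rw [hab, rho_self] at h1
      have h2 : T X ≤ rho x a b := T_le_rho x hne'
      rw [abs_le] at h1
      have := h1.1
      simp only [zero_sub, neg_le] at this
      linarith
    have hbij : Function.Bijective φ := Finite.injective_iff_bijective.mp hinj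
    -- φ none = none
    have hnone : φ (none : Option X) = (none : Option X) := by
      by_contra hc
      obtain ⟨a, ha⟩ := hbij.surjective (none : Option X)
      have hasome : a ≠ (none : Option X) := by
        intro h; rw [h] at ha; exact hc ha
      obtain ⟨a0, rfl⟩ := Option.ne_none_iff_exists'.mp hasome
      -- pick another point of X
      have : Nontrivial X := ⟨⟨x, x', hne⟩⟩
      obtain ⟨b0, hb0⟩ := exists_ne a0
      have hb : φ (some b0) ≠ (none : Option X) := by
        intro h
        have : (some b0 : Option X) = some a0 := hinj (h.trans ha.symm)
        exact hb0 (Option.some_injective _ this)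
      obtain ⟨c0, hc0⟩ := Option.ne_none_iff_exists'.mp hb
      have h1 := E (some a0) (some b0)
      have h2 : rho x (some a0) (some b0) = T X :=
        rho_some_some_ne x (fun h => hb0 h.symm)
      have h3 : rho x' (φ (some a0)) (φ (some b0)) = rho x' none (some c0) := by
        rw [ha, hc0]
      have h4 : 3 * T X ≤ rho x' none (some c0) := by
        rw [rho_none_some]
        have := lam_nonneg X c0
        have := dist_nonneg (x := x') (y := c0)
        linarith
      rw [h2, h3, abs_le] at h1
      linarith [h1.2]
    -- φ maps some to some, and the label argument shows φ (some y) = some y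
    have hfix : ∀ y : X, φ (some y) = some y := by
      intro y
      have hne' : φ (some y) ≠ (none : Option X) := by
        intro h
        have : (some y : Option X) = none := hinj (h.trans hnone.symm)
        simp at this
      obtain ⟨z, hz⟩ := Option.ne_none_iff_exists'.mp hne'
      have h1 := E (none : Option X) (some y)
      simp only [hnone, hz, rho_none_some] at h1
      by_contra hcne
      have hzy : z ≠ y := by
        intro h; rw [h] at hz; exact hcne hz
      have hgap := lam_gap X hzy
      have hdy := dist_le_DD X x y
      have hdz := dist_le_DD X x' z
      have hdy0 := dist_nonneg (x := x) (y := y)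
      have hdz0 := dist_nonneg (x := x') (y := z)
      rw [abs_le] at h1
      have habs : |lam X z - lam X y| ≤ 2 * (r + δ) + 4 * DD X := by
        rw [abs_le]
        constructor
        · linarith [h1.1]
        · linarith [h1.2]
      linarith
    -- conclude
    have h1 := E (none : Option X) (some x)
    simp only [hnone, hfix x, rho_none_some, dist_self, dist_comm x' x] at h1
    rw [abs_le] at h1
    have hfin2 : dist x x' ≤ r + δ := by linarith [h1.2]
    linarith
  linarith
end
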